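/- Consider the two-player two-dimensional Battling Influencers Game with action set 𝒳 = [−a,a] × [−a,a] for some a > 0, receiver x̂ = (x_1 + x_2)/2, targets t_1 = (−1, 0) and t_2 = (1, 0), and losses ℓ_i(x_1,x_2) = ‖(x_1+x_2)/2 − t_i‖₂². Then for every z ∈ [−a,a], the profile (x_1, x_2) = ((−a, −z), (a, z)) is a pure Nash equilibrium. In particular, the game has infinitely many pure Nash equilibria. -/
import Mathlib


noncomputable section

/-- Squared Euclidean distance between the receiver `x̂ = (x₁ + x₂)/2` and the
target `t` in the plane: `‖(x₁ + x₂)/2 − t‖₂²` written in coordinates. -/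
def loss2D (t x1 x2 : ℝ × ℝ) : ℝ :=
  ((x1.1 + x2.1) / 2 - t.1) ^ 2 + ((x1.2 + x2.2) / 2 - t.2) ^ 2

/-- `(x₁, x₂)` is a pure Nash equilibrium of the two-player planar Battling
Influencers Game on the square `𝒳 = [−a, a] × [−a, a]` with targets `t₁, t₂`. -/
def IsPureNE2D (a : ℝ) (t1 t2 x1 x2 : ℝ × ℝ) : Prop :=
  x1 ∈ Set.Icc (-a) a ×ˢ Set.Icc (-a) a ∧
    x2 ∈ Set.Icc (-a) a ×ˢ Set.Icc (-a) a ∧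
    (∀ y ∈ Set.Icc (-a) a ×ˢ Set.Icc (-a) a, loss2D t1 x1 x2 ≤ loss2D t1 y x2) ∧
    (∀ y ∈ Set.Icc (-a) a ×ˢ Set.Icc (-a) a, loss2D t2 x1 x2 ≤ loss2D t2 x1 y)

/-- In the planar game with targets `t₁ = (−1, 0)` and `t₂ = (1, 0)` on the
square `[−a, a]²` with `a > 0`, every profile `((−a, −z), (a, z))` with
`z ∈ [−a, a]` is a pure Nash equilibrium; in particular there are infinitely
many pure Nash equilibria. -/
theorem planar_infinitely_many_pNE (a : ℝ) (ha : 0 < a) :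
    (∀ z ∈ Set.Icc (-a) a,
        IsPureNE2D a (-1, 0) (1, 0) (-a, -z) (a, z)) ∧
      {p : (ℝ × ℝ) × (ℝ × ℝ) | IsPureNE2D a (-1, 0) (1, 0) p.1 p.2}.Infinite := by
  have hmain : ∀ z ∈ Set.Icc (-a) a,
      IsPureNE2D a (-1, 0) (1, 0) (-a, -z) (a, z) := by
    intro z hz
    obtain ⟨hz1, hz2⟩ := hz
    refine ⟨⟨⟨le_refl _, show -a ≤ a by linarith⟩,
        show -a ≤ -z by linarith, show -z ≤ a by linarith⟩,
      ⟨⟨show -a ≤ a by linarith, le_refl _⟩, ⟨hz1, hz2⟩⟩, ?_, ?_⟩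
    · rintro ⟨y1, y2⟩ ⟨⟨h1, _⟩, _⟩
      simp only [loss2D]
      have : (1:ℝ) ≤ ((y1 + a) / 2 - (-1)) ^ 2 := by nlinarith
      nlinarith [sq_nonneg ((y2 + z) / 2)]
    · rintro ⟨y1, y2⟩ ⟨⟨_, h1⟩, _⟩
      simp only [loss2D]
      have : (1:ℝ) ≤ ((-a + y1) / 2 - 1) ^ 2 := by nlinarith
      nlinarith [sq_nonneg ((-z + y2) / 2)]
  refine ⟨hmain, ?_⟩
  have hinj : Set.InjOn (fun z : ℝ => (((-a, -z), (a, z)) : (ℝ × ℝ) × (ℝ × ℝ)))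
      (Set.Icc (-a) a) := by
    intro x _ y _ h
    simpa using congrArg (fun p => p.2.2) h
  have hsub : (fun z : ℝ => (((-a, -z), (a, z)) : (ℝ × ℝ) × (ℝ × ℝ))) '' Set.Icc (-a) a ⊆
      {p : (ℝ × ℝ) × (ℝ × ℝ) | IsPureNE2D a (-1, 0) (1, 0) p.1 p.2} := by
    rintro p ⟨z, hz, rfl⟩
    exact hmain z hz
  exact Set.Infinite.mono hsub
    (((Set.Icc_infinite (by linarith)).image hinj))

end
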